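/- Every circle graph is a Naji graph: if a finite simple graph G is the interlacement graph of some double occurrence word, then the Naji equations of G have a solution over GF(2). -/

import Mathlib

namespace CircleNajiAux

variable {V : Type*}

/-- Build a 3-element sublist from three increasing indices. -/
lemma sublist_of_three {W : List V} {a b c : V} {i j k : ℕ}
    (hij : i < j) (hjk : j < k)
    (ha : W[i]? = some a) (hb : W[j]? = some b) (hc : W[k]? = some c) :
    [a, b, c].Sublist W := by
  have hkW : k < W.length := (List.getElem?_eq_some_iff.mp hc).1
  rw [List.sublist_iff_exists_orderEmbedding_getElem?_eq]
  refine ⟨OrderEmbedding.ofStrictMono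
    (fun n => if n = 0 then i else if n = 1 then j else if n = 2 then k else n + W.length) ?_, ?_⟩
  · apply strictMono_nat_of_lt_succ
    intro n
    rcases n with _ | _ | _ | n <;> simp <;> omega
  · intro ix
    rcases ix with _ | _ | _ | ix
    · simpa using ha.symm
    · simpa using hb.symm
    · simpa using hc.symm
    · simp [List.getElem?_eq_none]

/-- Build a 4-element sublist from four increasing indices. -/
lemma sublist_of_four {W : List V} {a b c d : V} {i j k l : ℕ}
    (hij : i < j) (hjk : j < k) (hkl : k < l)
    (ha : W[i]? = some a) (hb : W[j]? = some b) (hc : W[k]? = some c)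
    (hd : W[l]? = some d) :
    [a, b, c, d].Sublist W := by
  have hlW : l < W.length := (List.getElem?_eq_some_iff.mp hd).1
  rw [List.sublist_iff_exists_orderEmbedding_getElem?_eq]
  refine ⟨OrderEmbedding.ofStrictMono
    (fun n => if n = 0 then i else if n = 1 then j else if n = 2 then k
      else if n = 3 then l else n + W.length) ?_, ?_⟩
  · apply strictMono_nat_of_lt_succ
    intro n
    rcases n with _ | _ | _ | _ | n <;> simp <;> omega
  · intro ix
    rcases ix with _ | _ | _ | _ | ix
    · simpa using ha.symm
    · simpa using hb.symm
    · simpa using hc.symm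
    · simpa using hd.symm
    · simp [List.getElem?_eq_none]

/-- In a word where `v` occurs exactly twice, there are exactly two indices carrying `v`. -/
lemma two_occurrences [DecidableEq V] {W : List V} {v : V} (h : W.count v = 2) :
    ∃ p q : ℕ, p < q ∧ W[p]? = some v ∧ W[q]? = some v ∧
      ∀ i, W[i]? = some v → i = p ∨ i = q := by
  have hd : [v, v].Sublist W :=
    List.duplicate_iff_sublist.mp (List.duplicate_iff_two_le_count.mpr (by omega))
  rw [List.sublist_iff_exists_orderEmbedding_getElem?_eq] at hd
  obtain ⟨f, hf⟩ := hd
  have e0 : W[(f 0)]? = some v := by simpa using (hf 0).symm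
  have e1 : W[(f 1)]? = some v := by simpa using (hf 1).symm
  have h01 : f 0 < f 1 := f.strictMono (by norm_num)
  refine ⟨f 0, f 1, h01, e0, e1, ?_⟩
  intro i hi
  by_contra hcon
  push_neg at hcon
  have h3 : [v, v, v].Sublist W := by
    rcases Nat.lt_trichotomy i (f 0) with hlt | heq | hgt
    · exact sublist_of_three hlt h01 hi e0 e1
    · exact (hcon.1 heq).elim
    · rcases Nat.lt_trichotomy i (f 1) with hlt' | heq' | hgt'
      · exact sublist_of_three hgt hlt' e0 hi e1
      · exact (hcon.2 heq').elim
      · exact sublist_of_three h01 hgt' e0 e1 hi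
  have h3' : (3 : ℕ) ≤ W.count v := by simpa using h3.count_le v
  omega

end CircleNajiAux


/-- A Naji solution of the simple graph `G`: an assignment of `GF(2)` values to ordered
pairs of distinct vertices (encoded as a function `V → V → ZMod 2` vanishing on the
diagonal) satisfying Naji's equations (a), (b), (c). -/
def NajiSolution {V : Type*} (G : SimpleGraph V) (β : V → V → ZMod 2) : Prop :=
  (∀ v, β v v = 0) ∧
  (∀ v w, G.Adj v w → β v w + β w v = 1) ∧
  (∀ v w x : V, v ≠ w → v ≠ x → w ≠ x →
    G.Adj v w → ¬ G.Adj v x → ¬ G.Adj w x → β x v + β x w = 0) ∧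
  (∀ v w x : V, v ≠ w → v ≠ x → w ≠ x →
    G.Adj v w → G.Adj v x → ¬ G.Adj w x →
    β v w + β v x + β w x + β x w = 1)

/-- A double occurrence word on the letter set `V`: every letter appears exactly twice. -/
def IsDOW {V : Type*} [DecidableEq V] (W : List V) : Prop := ∀ v : V, W.count v = 2

/-- Two letters are interlaced in `W` if they occur in the order `v,w,v,w` or `w,v,w,v`. -/
def Interlaced {V : Type*} (W : List V) (v w : V) : Prop :=
  [v, w, v, w].Sublist W ∨ [w, v, w, v].Sublist W

/-- The interlacement graph of a word: distinct letters are adjacent iff interlaced. -/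
def interlacementGraph {V : Type*} (W : List V) : SimpleGraph V where
  Adj v w := v ≠ w ∧ Interlaced W v w
  symm := ⟨fun _ _ h => ⟨h.1.symm, Or.symm h.2⟩⟩
  loopless := ⟨fun _ h => h.1 rfl⟩

/-- `G` is a circle graph if it is the interlacement graph of a double occurrence word. -/
def IsCircleGraph {V : Type*} [DecidableEq V] (G : SimpleGraph V) : Prop :=
  ∃ W : List V, IsDOW W ∧ interlacementGraph W = G

/-- Every circle graph is a Naji graph: the interlacement graph of any double occurrence
word admits a Naji solution over `GF(2)`. -/
theorem circleGraph_isNajiGraph {V : Type*} [Fintype V] [DecidableEq V]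
    (W : List V) (hW : IsDOW W) :
    ∃ β : V → V → ZMod 2, NajiSolution (interlacementGraph W) β := by
  classical
  choose p q hpq hp hq huniq using fun v => CircleNajiAux.two_occurrences (hW v)
  have adj_iff : ∀ v w : V, (interlacementGraph W).Adj v w ↔ v ≠ w ∧ Interlaced W v w :=
    fun _ _ => Iff.rfl
  -- indices of distinct letters are distinct
  have hne : ∀ v w : V, v ≠ w → p v ≠ p w ∧ p v ≠ q w ∧ q v ≠ p w ∧ q v ≠ q w := by
    intro v w hvw
    have key : ∀ i j : ℕ, W[i]? = some v → W[j]? = some w → i ≠ j := by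
      intro i j h1 h2 hij
      exact hvw (Option.some_injective _ ((hij ▸ h1).symm.trans h2))
    exact ⟨key _ _ (hp v) (hp w), key _ _ (hp v) (hq w),
      key _ _ (hq v) (hp w), key _ _ (hq v) (hq w)⟩
  -- interlacement in terms of indices
  have hInt : ∀ v w : V, Interlaced W v w ↔
      ((p v < p w ∧ p w < q v ∧ q v < q w) ∨ (p w < p v ∧ p v < q w ∧ q w < q v)) := by
    have fwd : ∀ v w : V, [v, w, v, w].Sublist W →
        p v < p w ∧ p w < q v ∧ q v < q w := by
      intro v w h
      rw [List.sublist_iff_exists_orderEmbedding_getElem?_eq] at h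
      obtain ⟨f, hf⟩ := h
      have e0 : W[(f 0)]? = some v := by simpa using (hf 0).symm
      have e1 : W[(f 1)]? = some w := by simpa using (hf 1).symm
      have e2 : W[(f 2)]? = some v := by simpa using (hf 2).symm
      have e3 : W[(f 3)]? = some w := by simpa using (hf 3).symm
      have m01 : f 0 < f 1 := f.strictMono (by norm_num)
      have m12 : f 1 < f 2 := f.strictMono (by norm_num)
      have m23 : f 2 < f 3 := f.strictMono (by norm_num)
      have u0 := huniq v _ e0
      have u2 := huniq v _ e2
      have u1 := huniq w _ e1
      have u3 := huniq w _ e3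
      have hv := hpq v
      have hw := hpq w
      omega
    intro v w
    constructor
    · rintro (h | h)
      · exact Or.inl (fwd v w h)
      · have := fwd w v h
        exact Or.inr ⟨this.1, this.2.1, this.2.2⟩
    · rintro (⟨h1, h2, h3⟩ | ⟨h1, h2, h3⟩)
      · exact Or.inl (CircleNajiAux.sublist_of_four h1 h2 h3 (hp v) (hp w) (hq v) (hq w))
      · exact Or.inr (CircleNajiAux.sublist_of_four h1 h2 h3 (hp w) (hp v) (hq w) (hq v))
  refine ⟨fun v w => if p v < p w ∧ p w < q v then 1 else 0, ?_, ?_, ?_, ?_⟩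
  · intro v
    simp
  · rintro v w ⟨hvw, hI⟩
    rw [hInt] at hI
    have d := hne v w hvw
    have hv := hpq v
    have hw := hpq w
    by_cases h1 : p v < p w ∧ p w < q v <;> by_cases h2 : p w < p v ∧ p v < q w <;>
      simp only [h1, h2, if_true, if_false, if_pos, if_neg, not_false_iff] <;>
      first
        | decide
        | (exfalso; omega)
  · rintro v w x hvw hvx hwx ⟨-, hIvw⟩ hNvx hNwx
    have hIvx : ¬ Interlaced W v x := fun h => hNvx ⟨hvx, h⟩
    have hIwx : ¬ Interlaced W w x := fun h => hNwx ⟨hwx, h⟩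
    rw [hInt] at hIvw hIvx hIwx
    have dvw := hne v w hvw
    have dvx := hne v x hvx
    have dwx := hne w x hwx
    have hv := hpq v
    have hw := hpq w
    have hx := hpq x
    by_cases h1 : p x < p v ∧ p v < q x <;> by_cases h2 : p x < p w ∧ p w < q x <;>
      simp only [h1, h2, if_true, if_false, if_pos, if_neg, not_false_iff] <;>
      first
        | decide
        | (exfalso; omega)
  · rintro v w x hvw hvx hwx ⟨-, hIvw⟩ ⟨-, hIvx⟩ hNwx
    have hIwx : ¬ Interlaced W w x := fun h => hNwx ⟨hwx, h⟩
    rw [hInt] at hIvw hIvx hIwx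
    have dvw := hne v w hvw
    have dvx := hne v x hvx
    have dwx := hne w x hwx
    have hv := hpq v
    have hw := hpq w
    have hx := hpq x
    by_cases h1 : p v < p w ∧ p w < q v <;>
      by_cases h2 : p v < p x ∧ p x < q v <;>
      by_cases h3 : p w < p x ∧ p x < q w <;>
      by_cases h4 : p x < p w ∧ p w < q x <;>
      simp only [h1, h2, h3, h4, if_true, if_false, if_pos, if_neg, not_false_iff] <;>
      first
        | decide
        | (exfalso; omega)
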